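/- Let X be a finite set with |X| = n ≥ 2. Every hierarchy H on X satisfies |H| ≤ 2n − 1; moreover, the following three assertions about a hierarchy H on X are equivalent: (a) |H| = 2n − 1; (b) H is a maximal hierarchy on X, i.e., no hierarchy on X properly contains H; (c) H = H*. -/

import Mathlib

/-- Two subsets `A`, `B` are compatible if `A ∩ B ∈ {∅, A, B}`. -/
def Compatible {α : Type*} [DecidableEq α] (A B : Finset α) : Prop :=
  A ∩ B = ∅ ∨ A ∩ B = A ∨ A ∩ B = B

instance {α : Type*} [DecidableEq α] (A B : Finset α) : Decidable (Compatible A B) := by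
  unfold Compatible; infer_instance

/-- A cluster system: a collection of non-empty subsets of `X`. -/
def IsCSF {α : Type*} [DecidableEq α] (C : Finset (Finset α)) : Prop :=
  ∀ A ∈ C, A.Nonempty

/-- A hierarchy: a cluster system whose members are pairwise compatible. -/
def IsHierarchyF {α : Type*} [DecidableEq α] (C : Finset (Finset α)) : Prop :=
  IsCSF C ∧ ∀ A ∈ C, ∀ B ∈ C, Compatible A B

/-- A maximal hierarchy: a hierarchy not properly contained in any other hierarchy. -/
def IsMaxHierarchyF {α : Type*} [DecidableEq α] (H : Finset (Finset α)) : Prop :=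
  IsHierarchyF H ∧ ∀ D : Finset (Finset α), IsHierarchyF D → H ⊆ D → D = H

/-- The adjoint `C*`: all non-empty subsets of `X` compatible with every member of `C`. -/
def adjF {α : Type*} [Fintype α] [DecidableEq α] (C : Finset (Finset α)) : Finset (Finset α) :=
  Finset.univ.filter (fun A => A.Nonempty ∧ ∀ B ∈ C, Compatible A B)

section Aux
variable {α : Type*} [DecidableEq α]

lemma compat_symm {A B : Finset α} (h : Compatible A B) : Compatible B A := by
  unfold Compatible at *
  rw [Finset.inter_comm] at h
  tauto

lemma hierarchy_subset {H D : Finset (Finset α)} (hH : IsHierarchyF H) (hD : D ⊆ H) :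
    IsHierarchyF D :=
  ⟨fun A hA => hH.1 A (hD hA), fun A hA B hB => hH.2 A (hD hA) B (hD hB)⟩

def maxM (H : Finset (Finset α)) : Finset (Finset α) :=
  H.filter (fun A => ∀ B ∈ H, A ⊆ B → A = B)

lemma maxM_subset {H : Finset (Finset α)} : maxM H ⊆ H := Finset.filter_subset _ _

lemma exists_max {H : Finset (Finset α)} {A : Finset α} (hA : A ∈ H) :
    ∃ M ∈ maxM H, A ⊆ M := by
  obtain ⟨m, hm, hmax⟩ := (H.filter (fun B => A ⊆ B)).exists_maximal
    ⟨A, by simp [hA]⟩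
  simp only [Finset.mem_filter] at hm
  refine ⟨m, ?_, hm.2⟩
  simp only [maxM, Finset.mem_filter]
  refine ⟨hm.1, fun B hB hmB => ?_⟩
  by_contra hne
  exact hne (le_antisymm hmB (hmax (by simp [hB, hm.2.trans hmB]) hmB))

lemma maxM_disjoint {H : Finset (Finset α)} (hH : IsHierarchyF H) {M N : Finset α}
    (hM : M ∈ maxM H) (hN : N ∈ maxM H) (hMN : M ≠ N) : M ∩ N = ∅ := by
  simp only [maxM, Finset.mem_filter] at hM hN
  rcases hH.2 M hM.1 N hN.1 with h | h | h
  · exact h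
  · exact absurd (hM.2 N hN.1 (Finset.inter_eq_left.mp h)) hMN
  · exact absurd (hN.2 M hM.1 (Finset.inter_eq_right.mp h)).symm hMN

lemma maxM_max {H : Finset (Finset α)} {M B : Finset α} (hM : M ∈ maxM H)
    (hB : B ∈ H) (hMB : M ⊆ B) : M = B := by
  simp only [maxM, Finset.mem_filter] at hM
  exact hM.2 B hB hMB

lemma filters_disjoint {H : Finset (Finset α)} (hH : IsHierarchyF H) :
    ∀ M ∈ maxM H, ∀ N ∈ maxM H, M ≠ N →
      Disjoint (H.filter (· ⊆ M)) (H.filter (· ⊆ N)) := by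
  intro M hM N hN hMN
  rw [Finset.disjoint_left]
  intro A hAM hAN
  simp only [Finset.mem_filter] at hAM hAN
  obtain ⟨x, hx⟩ := hH.1 A hAM.1
  have hxMN : x ∈ M ∩ N := Finset.mem_inter.mpr ⟨hAM.2 hx, hAN.2 hx⟩
  rw [maxM_disjoint hH hM hN hMN] at hxMN
  exact absurd hxMN (Finset.notMem_empty x)

lemma card_eq_sum_max {H : Finset (Finset α)} (hH : IsHierarchyF H) :
    H.card = ∑ M ∈ maxM H, (H.filter (· ⊆ M)).card := by
  rw [← Finset.card_biUnion (filters_disjoint hH)]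
  congr 1
  apply Finset.Subset.antisymm
  · intro A hA
    obtain ⟨M, hM, hAM⟩ := exists_max hA
    exact Finset.mem_biUnion.mpr ⟨M, hM, Finset.mem_filter.mpr ⟨hA, hAM⟩⟩
  · intro A hA
    obtain ⟨M, _, hA⟩ := Finset.mem_biUnion.mp hA
    exact (Finset.mem_filter.mp hA).1

lemma biUnion_maxM {H : Finset (Finset α)} :
    H.biUnion id = (maxM H).biUnion id := by
  apply Finset.Subset.antisymm
  · intro x hx
    obtain ⟨A, hA, hxA⟩ := Finset.mem_biUnion.mp hx
    obtain ⟨M, hM, hAM⟩ := exists_max hA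
    exact Finset.mem_biUnion.mpr ⟨M, hM, hAM hxA⟩
  · exact Finset.biUnion_subset_biUnion_of_subset_left _ maxM_subset

lemma card_biUnion_eq {H : Finset (Finset α)} (hH : IsHierarchyF H) :
    (H.biUnion id).card = ∑ M ∈ maxM H, M.card := by
  rw [biUnion_maxM]
  apply Finset.card_biUnion
  intro M hM N hN hMN
  rw [Function.onFun, id, id, Finset.disjoint_iff_inter_eq_empty]
  exact maxM_disjoint hH hM hN hMN

lemma mem_subset_biUnion {H : Finset (Finset α)} {A : Finset α} (hA : A ∈ H) :
    A ⊆ H.biUnion id := fun x hx => Finset.mem_biUnion.mpr ⟨A, hA, hx⟩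

lemma two_max {H : Finset (Finset α)} (hH : IsHierarchyF H) (hne : H.Nonempty)
    (hU : H.biUnion id ∉ H) : 2 ≤ (maxM H).card := by
  obtain ⟨A, hA⟩ := hne
  obtain ⟨M₀, hM₀, _⟩ := exists_max hA
  have hM₀H : M₀ ∈ H := maxM_subset hM₀
  have hM₀U : M₀ ⊆ H.biUnion id := mem_subset_biUnion hM₀H
  have hM₀ne : M₀ ≠ H.biUnion id := fun h => hU (h ▸ hM₀H)
  obtain ⟨x, hxU, hxM₀⟩ := Finset.exists_of_ssubset (lt_of_le_of_ne hM₀U hM₀ne)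
  obtain ⟨B, hB, hxB⟩ := Finset.mem_biUnion.mp hxU
  obtain ⟨M₁, hM₁, hBM₁⟩ := exists_max hB
  have : M₀ ≠ M₁ := fun h => hxM₀ (h ▸ hBM₁ hxB)
  exact Finset.one_lt_card.mpr ⟨M₀, hM₀, M₁, hM₁, this⟩

end Aux

lemma hierarchy_bound {α : Type*} [DecidableEq α] (H : Finset (Finset α)) :
    IsHierarchyF H → H.Nonempty →
      H.card + 1 ≤ 2 * (H.biUnion id).card ∧
      (H.biUnion id ∉ H → H.card + 2 ≤ 2 * (H.biUnion id).card) := by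
  induction H using Finset.strongInduction with
  | _ H IH =>
    intro hH hne
    by_cases hUH : H.biUnion id ∈ H
    · refine ⟨?_, fun h => absurd hUH h⟩
      set U := H.biUnion id with hUdef
      have hcardH : H.card = (H.erase U).card + 1 := by
        rw [Finset.card_erase_of_mem hUH]
        have : 1 ≤ H.card := Finset.card_pos.mpr hne
        omega
      rcases (H.erase U).eq_empty_or_nonempty with h0 | hne'
      · have hU1 : 1 ≤ U.card := Finset.card_pos.mpr (hH.1 U hUH)
        have h00 : (H.erase U).card = 0 := by rw [h0]; rfl
        omega
      · have hss : H.erase U ⊂ H := Finset.erase_ssubset hUH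
        have hh' : IsHierarchyF (H.erase U) := hierarchy_subset hH hss.subset
        have ihs := IH _ hss hh' hne'
        have hsub : (H.erase U).biUnion id ⊆ U :=
          Finset.biUnion_subset_biUnion_of_subset_left _ hss.subset
        by_cases hUU : (H.erase U).biUnion id = U
        · have hnotin : (H.erase U).biUnion id ∉ H.erase U := by
            rw [hUU]; exact Finset.notMem_erase _ _
          have := ihs.2 hnotin
          rw [hUU] at this
          omega
        · have hlt : ((H.erase U).biUnion id).card < U.card :=
            Finset.card_lt_card (lt_of_le_of_ne hsub hUU)
          have := ihs.1
          omega
    · have key : H.card + 2 ≤ 2 * (H.biUnion id).card := by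
        have h2 : 2 ≤ (maxM H).card := two_max hH hne hUH
        have hpt : ∀ M ∈ maxM H, (H.filter (· ⊆ M)).card + 1 ≤ 2 * M.card := by
          intro M hM
          have hMH : M ∈ H := maxM_subset hM
          obtain ⟨M', hM', hMM'⟩ := Finset.exists_mem_ne h2 M
          have hss : H.filter (· ⊆ M) ⊂ H := by
            refine Finset.filter_ssubset.mpr ⟨M', maxM_subset hM', ?_⟩
            intro hsub
            obtain ⟨x, hx⟩ := hH.1 M' (maxM_subset hM')
            have : x ∈ M' ∩ M := Finset.mem_inter.mpr ⟨hx, hsub hx⟩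
            rw [maxM_disjoint hH hM' hM hMM'] at this
            exact absurd this (Finset.notMem_empty x)
          have hh' : IsHierarchyF (H.filter (· ⊆ M)) :=
            hierarchy_subset hH hss.subset
          have hMmem : M ∈ H.filter (· ⊆ M) :=
            Finset.mem_filter.mpr ⟨hMH, Finset.Subset.refl M⟩
          have hbu : (H.filter (· ⊆ M)).biUnion id = M := by
            apply Finset.Subset.antisymm
            · intro x hx
              obtain ⟨A, hA, hxA⟩ := Finset.mem_biUnion.mp hx
              exact (Finset.mem_filter.mp hA).2 hxA
            · exact mem_subset_biUnion hMmem
          have := (IH _ hss hh' ⟨M, hMmem⟩).1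
          rwa [hbu] at this
        have hsum : ∑ M ∈ maxM H, ((H.filter (· ⊆ M)).card + 1) ≤
            ∑ M ∈ maxM H, 2 * M.card := Finset.sum_le_sum hpt
        rw [Finset.sum_add_distrib, Finset.sum_const, smul_eq_mul, mul_one,
          ← Finset.mul_sum] at hsum
        rw [card_eq_sum_max hH, card_biUnion_eq hH]
        omega
      exact ⟨by omega, fun _ => key⟩

lemma exists_new {α : Type*} [DecidableEq α] (H : Finset (Finset α)) :
    ∀ S : Finset α, IsHierarchyF H → (∀ A ∈ H, A ⊆ S) → S ∈ H →
      (∀ x ∈ S, ({x} : Finset α) ∈ H) → H.card + 1 < 2 * S.card →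
      ∃ A, A ∉ H ∧ A.Nonempty ∧ A ⊆ S ∧ ∀ B ∈ H, Compatible A B := by
  induction H using Finset.strongInduction with
  | _ H IH =>
    intro S hH hsub hS hsing hcard
    have hS2 : 2 ≤ S.card := by
      have : 1 ≤ H.card := Finset.card_pos.mpr ⟨S, hS⟩
      omega
    set H' := H.erase S with hH'def
    have hH'ss : H' ⊂ H := Finset.erase_ssubset hS
    have hH'h : IsHierarchyF H' := hierarchy_subset hH hH'ss.subset
    have hsing' : ∀ x ∈ S, ({x} : Finset α) ∈ H' := by
      intro x hx
      refine Finset.mem_erase.mpr ⟨?_, hsing x hx⟩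
      intro h
      have := congrArg Finset.card h
      simp only [Finset.card_singleton] at this
      omega
    have hSU : H'.biUnion id = S := by
      apply Finset.Subset.antisymm
      · intro y hy
        obtain ⟨B, hB, hyB⟩ := Finset.mem_biUnion.mp hy
        exact hsub B (hH'ss.subset hB) hyB
      · intro x hx
        exact Finset.mem_biUnion.mpr ⟨{x}, hsing' x hx, Finset.mem_singleton_self x⟩
    have hSnot : S ∉ H' := Finset.notMem_erase _ _
    have hSne : S.Nonempty := Finset.card_pos.mp (by omega)
    obtain ⟨x₀, hx₀⟩ := hSne
    have hH'ne : H'.Nonempty := ⟨{x₀}, hsing' x₀ hx₀⟩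
    have h2 : 2 ≤ (maxM H').card := two_max hH'h hH'ne (by rw [hSU]; exact hSnot)
    have hMsubS : ∀ M ∈ maxM H', M ⊆ S := fun M hM =>
      hsub M (hH'ss.subset (maxM_subset hM))
    have hcardH : H.card = H'.card + 1 := by
      rw [hH'def, Finset.card_erase_of_mem hS]
      have : 1 ≤ H.card := Finset.card_pos.mpr ⟨S, hS⟩
      omega
    rcases lt_or_ge 2 ((maxM H').card) with h3 | h3
    · -- at least three maximal members: take union of two of them
      obtain ⟨M₁, hM₁, M₂, hM₂, h12⟩ := Finset.one_lt_card.mp (by omega : 1 < (maxM H').card)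
      have hM3 : (((maxM H').erase M₁).erase M₂).Nonempty := by
        rw [← Finset.card_pos]
        have e1 := Finset.pred_card_le_card_erase (s := maxM H') (a := M₁)
        have e2 := Finset.pred_card_le_card_erase (s := (maxM H').erase M₁) (a := M₂)
        omega
      obtain ⟨M₃, hM₃'⟩ := hM3
      have hM₃2 : M₃ ≠ M₂ := (Finset.mem_erase.mp hM₃').1
      have hM₃1 : M₃ ≠ M₁ := (Finset.mem_erase.mp (Finset.mem_erase.mp hM₃').2).1
      have hM₃ : M₃ ∈ maxM H' := (Finset.mem_erase.mp (Finset.mem_erase.mp hM₃').2).2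
      obtain ⟨x₃, hx₃⟩ := hH'h.1 M₃ (maxM_subset hM₃)
      refine ⟨M₁ ∪ M₂, ?_, ?_, ?_, ?_⟩
      · -- not in H
        intro hmem
        have hx₃A : x₃ ∉ M₁ ∪ M₂ := by
          intro h
          rcases Finset.mem_union.mp h with h | h
          · have : x₃ ∈ M₃ ∩ M₁ := Finset.mem_inter.mpr ⟨hx₃, h⟩
            rw [maxM_disjoint hH'h hM₃ hM₁ hM₃1] at this
            exact absurd this (Finset.notMem_empty x₃)
          · have : x₃ ∈ M₃ ∩ M₂ := Finset.mem_inter.mpr ⟨hx₃, h⟩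
            rw [maxM_disjoint hH'h hM₃ hM₂ hM₃2] at this
            exact absurd this (Finset.notMem_empty x₃)
        have hAneS : M₁ ∪ M₂ ≠ S := by
          intro h
          exact hx₃A (h ▸ hMsubS M₃ hM₃ hx₃)
        have hmem' : M₁ ∪ M₂ ∈ H' := Finset.mem_erase.mpr ⟨hAneS, hmem⟩
        obtain ⟨M', hM', hsub'⟩ := exists_max hmem'
        have e1 : M₁ = M' := maxM_max hM₁ (maxM_subset hM')
          ((Finset.subset_union_left).trans hsub')
        have e2 : M₂ = M' := maxM_max hM₂ (maxM_subset hM')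
          ((Finset.subset_union_right).trans hsub')
        exact h12 (e1.trans e2.symm)
      · obtain ⟨y, hy⟩ := hH'h.1 M₁ (maxM_subset hM₁)
        exact ⟨y, Finset.mem_union_left _ hy⟩
      · exact Finset.union_subset (hMsubS M₁ hM₁) (hMsubS M₂ hM₂)
      · intro B hB
        by_cases hBS : B = S
        · subst hBS
          right; left
          exact Finset.inter_eq_left.mpr (Finset.union_subset (hMsubS M₁ hM₁) (hMsubS M₂ hM₂))
        · have hB' : B ∈ H' := Finset.mem_erase.mpr ⟨hBS, hB⟩
          obtain ⟨M', hM', hBM'⟩ := exists_max hB'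
          by_cases e1 : M' = M₁
          · right; right
            exact Finset.inter_eq_right.mpr (hBM'.trans (e1 ▸ Finset.subset_union_left))
          · by_cases e2 : M' = M₂
            · right; right
              exact Finset.inter_eq_right.mpr (hBM'.trans (e2 ▸ Finset.subset_union_right))
            · left
              rw [Finset.eq_empty_iff_forall_notMem]
              intro y hy
              have hyB := (Finset.mem_inter.mp hy).2
              have hyM' : y ∈ M' := hBM' hyB
              rcases Finset.mem_union.mp (Finset.mem_inter.mp hy).1 with h | h
              · have : y ∈ M₁ ∩ M' := Finset.mem_inter.mpr ⟨h, hyM'⟩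
                rw [maxM_disjoint hH'h hM₁ hM' (fun e => e1 e.symm)] at this
                exact absurd this (Finset.notMem_empty y)
              · have : y ∈ M₂ ∩ M' := Finset.mem_inter.mpr ⟨h, hyM'⟩
                rw [maxM_disjoint hH'h hM₂ hM' (fun e => e2 e.symm)] at this
                exact absurd this (Finset.notMem_empty y)
    · -- exactly two maximal members: recurse into one of them
      have h2' : (maxM H').card = 2 := le_antisymm h3 h2
      obtain ⟨M₁, M₂, h12, hMeq⟩ := Finset.card_eq_two.mp h2'
      have key : ∀ M N : Finset α, maxM H' = {M, N} → M ≠ N →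
          (H'.filter (· ⊆ M)).card + 1 < 2 * M.card →
          ∃ A, A ∉ H ∧ A.Nonempty ∧ A ⊆ S ∧ ∀ B ∈ H, Compatible A B := by
        intro M N hMN hMNne hc
        have hMmax : M ∈ maxM H' := hMN ▸ Finset.mem_insert_self _ _
        have hNmax : N ∈ maxM H' := hMN ▸ Finset.mem_insert_of_mem (Finset.mem_singleton_self _)
        have hMH' : M ∈ H' := maxM_subset hMmax
        set F := H'.filter (· ⊆ M) with hFdef
        have hFss : F ⊂ H := lt_of_le_of_lt (Finset.filter_subset _ _) hH'ss
        have hFh : IsHierarchyF F := hierarchy_subset hH hFss.subset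
        have hMF : M ∈ F := Finset.mem_filter.mpr ⟨hMH', Finset.Subset.refl M⟩
        have hMneS : M ≠ S := fun h => hSnot (h ▸ hMH')
        obtain ⟨A, hAF, hAne, hAM, hAcomp⟩ := IH F hFss M hFh
          (fun B hB => (Finset.mem_filter.mp hB).2) hMF
          (fun x hx => Finset.mem_filter.mpr
            ⟨hsing' x (hMsubS M hMmax hx), Finset.singleton_subset_iff.mpr hx⟩) hc
        refine ⟨A, ?_, hAne, hAM.trans (hMsubS M hMmax), ?_⟩
        · intro hAH
          have hAneS : A ≠ S := by
            intro h
            exact hMneS (Finset.Subset.antisymm (hMsubS M hMmax) (h ▸ hAM))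
          exact hAF (Finset.mem_filter.mpr ⟨Finset.mem_erase.mpr ⟨hAneS, hAH⟩, hAM⟩)
        · intro B hB
          by_cases hBS : B = S
          · subst hBS
            right; left
            exact Finset.inter_eq_left.mpr (hAM.trans (hMsubS M hMmax))
          · have hB' : B ∈ H' := Finset.mem_erase.mpr ⟨hBS, hB⟩
            obtain ⟨M', hM', hBM'⟩ := exists_max hB'
            have : M' = M ∨ M' = N := by
              have := hMN ▸ hM'
              simpa using this
            rcases this with rfl | rfl
            · exact hAcomp B (Finset.mem_filter.mpr ⟨hB', hBM'⟩)
            · left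
              rw [Finset.eq_empty_iff_forall_notMem]
              intro y hy
              have : y ∈ M ∩ M' := Finset.mem_inter.mpr
                ⟨hAM (Finset.mem_inter.mp hy).1, hBM' (Finset.mem_inter.mp hy).2⟩
              rw [maxM_disjoint hH'h hMmax hM' hMNne] at this
              exact absurd this (Finset.notMem_empty y)
      -- derive the card inequality for one of the two
      have hb1 := (hierarchy_bound _ (hierarchy_subset hH'h (Finset.filter_subset (· ⊆ M₁) H'))
        ⟨M₁, Finset.mem_filter.mpr ⟨maxM_subset (hMeq ▸ Finset.mem_insert_self _ _), Finset.Subset.refl _⟩⟩).1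
      have hb2 := (hierarchy_bound _ (hierarchy_subset hH'h (Finset.filter_subset (· ⊆ M₂) H'))
        ⟨M₂, Finset.mem_filter.mpr ⟨maxM_subset (hMeq ▸ Finset.mem_insert_of_mem (Finset.mem_singleton_self _)), Finset.Subset.refl _⟩⟩).1
      have hbu1 : ((H'.filter (· ⊆ M₁)).biUnion id) = M₁ := by
        apply Finset.Subset.antisymm
        · intro y hy
          obtain ⟨B, hB, hyB⟩ := Finset.mem_biUnion.mp hy
          exact (Finset.mem_filter.mp hB).2 hyB
        · exact mem_subset_biUnion (Finset.mem_filter.mpr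
            ⟨maxM_subset (hMeq ▸ Finset.mem_insert_self _ _), Finset.Subset.refl _⟩)
      have hbu2 : ((H'.filter (· ⊆ M₂)).biUnion id) = M₂ := by
        apply Finset.Subset.antisymm
        · intro y hy
          obtain ⟨B, hB, hyB⟩ := Finset.mem_biUnion.mp hy
          exact (Finset.mem_filter.mp hB).2 hyB
        · exact mem_subset_biUnion (Finset.mem_filter.mpr
            ⟨maxM_subset (hMeq ▸ Finset.mem_insert_of_mem (Finset.mem_singleton_self _)), Finset.Subset.refl _⟩)
      rw [hbu1] at hb1
      rw [hbu2] at hb2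
      have hsplit : H'.card = (H'.filter (· ⊆ M₁)).card + (H'.filter (· ⊆ M₂)).card := by
        rw [card_eq_sum_max hH'h, hMeq, Finset.sum_pair h12]
      have hScard : S.card = M₁.card + M₂.card := by
        rw [← hSU, card_biUnion_eq hH'h, hMeq, Finset.sum_pair h12]
      have : (H'.filter (· ⊆ M₁)).card + 1 < 2 * M₁.card ∨
          (H'.filter (· ⊆ M₂)).card + 1 < 2 * M₂.card := by omega
      rcases this with h | h
      · exact key M₁ M₂ hMeq h12 h
      · exact key M₂ M₁ (by rw [hMeq, Finset.pair_comm]) h12.symm h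

lemma insert_hierarchy {α : Type*} [DecidableEq α] {H : Finset (Finset α)}
    (hH : IsHierarchyF H) {A : Finset α} (hA : A.Nonempty)
    (hcomp : ∀ B ∈ H, Compatible A B) : IsHierarchyF (insert A H) := by
  constructor
  · intro B hB
    rcases Finset.mem_insert.mp hB with rfl | hB
    · exact hA
    · exact hH.1 B hB
  · intro B hB C hC
    rw [Finset.mem_insert] at hB hC
    rcases hB with rfl | hB
    · rcases hC with rfl | hC
      · right; left; exact Finset.inter_self _
      · exact hcomp _ hC
    · rcases hC with rfl | hC
      · exact compat_symm (hcomp _ hB)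
      · exact hH.2 B hB C hC


/-- Every hierarchy on an `n`-set (`n ≥ 2`) has at most `2n - 1` members, and for a
hierarchy `H`: `|H| = 2n - 1` ↔ `H` is a maximal hierarchy ↔ `H = H*`. -/
theorem stmt0 {α : Type*} [Fintype α] [DecidableEq α] (n : ℕ) (hn : 2 ≤ n)
    (hcard : Fintype.card α = n) (H : Finset (Finset α)) (hH : IsHierarchyF H) :
    H.card ≤ 2 * n - 1 ∧
    (H.card = 2 * n - 1 ↔ IsMaxHierarchyF H) ∧
    (IsMaxHierarchyF H ↔ H = adjF H) := by
  have hcardU : (Finset.univ : Finset α).card = n := by rw [Finset.card_univ, hcard]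
  have hXne : (Finset.univ : Finset α).Nonempty := Finset.card_pos.mp (by omega)
  have hub : ∀ D : Finset (Finset α), IsHierarchyF D → D.card ≤ 2 * n - 1 := by
    intro D hD
    rcases D.eq_empty_or_nonempty with rfl | hne
    · simp
    · have h := (hierarchy_bound D hD hne).1
      have : (D.biUnion id).card ≤ n := by
        rw [← hcardU]; exact Finset.card_le_card (Finset.subset_univ _)
      omega
  have hbc : IsMaxHierarchyF H ↔ H = adjF H := by
    constructor
    · intro ⟨_, hmax⟩
      apply Finset.Subset.antisymm
      · intro A hA
        simp only [adjF, Finset.mem_filter, Finset.mem_univ, true_and]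
        exact ⟨hH.1 A hA, fun B hB => hH.2 A hA B hB⟩
      · intro A hA
        simp only [adjF, Finset.mem_filter, Finset.mem_univ, true_and] at hA
        have hins := insert_hierarchy hH hA.1 hA.2
        have := hmax _ hins (Finset.subset_insert _ _)
        rw [← this]
        exact Finset.mem_insert_self _ _
    · intro heq
      refine ⟨hH, fun D hD hHD => ?_⟩
      apply Finset.Subset.antisymm _ hHD
      intro A hA
      rw [heq]
      simp only [adjF, Finset.mem_filter, Finset.mem_univ, true_and]
      exact ⟨hD.1 A hA, fun B hB => hD.2 A hA B (hHD hB)⟩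
  have hab : H.card = 2 * n - 1 → IsMaxHierarchyF H := by
    intro ha
    refine ⟨hH, fun D hD hHD => ?_⟩
    exact (Finset.eq_of_subset_of_card_le hHD (by rw [ha]; exact hub D hD)).symm
  have hba : IsMaxHierarchyF H → H.card = 2 * n - 1 := by
    intro ⟨_, hmax⟩
    have hunivH : Finset.univ ∈ H := by
      have hins := insert_hierarchy hH hXne
        (fun B _ => Or.inr (Or.inr (Finset.univ_inter B)))
      have := hmax _ hins (Finset.subset_insert _ _)
      rw [← this]
      exact Finset.mem_insert_self _ _
    have hsingH : ∀ x : α, ({x} : Finset α) ∈ H := by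
      intro x
      have hc : ∀ B ∈ H, Compatible {x} B := by
        intro B _
        by_cases hx : x ∈ B
        · right; left; exact Finset.singleton_inter_of_mem hx
        · left; exact Finset.singleton_inter_of_notMem hx
      have hins := insert_hierarchy hH (Finset.singleton_nonempty x) hc
      have := hmax _ hins (Finset.subset_insert _ _)
      rw [← this]
      exact Finset.mem_insert_self _ _
    by_contra hne2
    have hlt : H.card + 1 < 2 * (Finset.univ : Finset α).card := by
      have := hub H hH
      rw [hcardU]
      omega
    obtain ⟨A, hAH, hAne, _, hAcomp⟩ :=
      exists_new H Finset.univ hH (fun A _ => Finset.subset_univ A) hunivH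
        (fun x _ => hsingH x) hlt
    have hins := insert_hierarchy hH hAne hAcomp
    have := hmax _ hins (Finset.subset_insert _ _)
    exact hAH (this ▸ Finset.mem_insert_self A H)
  exact ⟨hub H hH, Iff.intro hab hba, hbc⟩
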